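/- arXiv:1901.08641 — 2 statements merged into one kernel-verified Lean document; each statement's English description precedes it below -/
import Mathlib

section
/- Let $\eta$ and $P_0$ be probability measures on a product space, $\xi = \{C \in \beta : \eta(C)>0\}$ for a finite partition $\beta$ with $\eta \prec_\beta P_0$, and $g:\Omega\to\mathbb{R}$ bounded measurable. Suppose that for each $C\in\xi$ and all $\omega,\omega'\in C$, $g(\omega') \leq g(\omega) + R$ for a constant $R\geq 0$. Then $\int g\,d\eta - KL(\eta : P_0 \mid \beta) \leq \log\int \exp(g)\,dP_0 + R$. -/
open MeasureTheory

/-- Abstract form of Lemma "LBpartition": a Donsker–Varadhan-type lower bound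
with a partition-oscillation error term `R`. -/
theorem donsker_varadhan_lower_bound {Ω : Type*} [MeasurableSpace Ω]
    (η P₀ : Measure Ω) [IsProbabilityMeasure η] [IsProbabilityMeasure P₀]
    {ι : Type*} [Fintype ι] (C : ι → Set Ω)
    (hCm : ∀ i, MeasurableSet (C i))
    (hCd : Pairwise (Function.onFun Disjoint C))
    (hCu : (⋃ i, C i) = Set.univ)
    (hprec : ∀ i, P₀ (C i) = 0 → η (C i) = 0)
    (g : Ω → ℝ) (hg : Measurable g) (B : ℝ) (hgb : ∀ ω, |g ω| ≤ B)
    (R : ℝ) (hR : 0 ≤ R)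
    (hosc : ∀ i, η (C i) ≠ 0 → ∀ ω ∈ C i, ∀ ω' ∈ C i, g ω' ≤ g ω + R) :
    (∫ ω, g ω ∂η) -
        (∑ i, (η (C i)).toReal *
          Real.log ((η (C i)).toReal / (P₀ (C i)).toReal)) ≤
      Real.log (∫ ω, Real.exp (g ω) ∂P₀) + R := by
  classical
  set p : ι → ℝ := fun i => (η (C i)).toReal with hp
  set q : ι → ℝ := fun i => (P₀ (C i)).toReal with hq
  set m : ι → ℝ := fun i => sInf (g '' C i) with hm
  set s : Finset ι := Finset.univ.filter (fun i => η (C i) ≠ 0) with hs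
  -- basic facts
  have hpnn : ∀ i, 0 ≤ p i := fun i => ENNReal.toReal_nonneg
  have hps : ∀ i ∈ s, 0 < p i := by
    intro i hi
    rw [hs, Finset.mem_filter] at hi
    exact ENNReal.toReal_pos hi.2 (measure_ne_top η _)
  have hqs : ∀ i ∈ s, 0 < q i := by
    intro i hi
    rw [hs, Finset.mem_filter] at hi
    have : P₀ (C i) ≠ 0 := fun h => hi.2 (hprec i h)
    exact ENNReal.toReal_pos this (measure_ne_top P₀ _)
  have hpz : ∀ i ∉ s, p i = 0 := by
    intro i hi
    rw [hs, Finset.mem_filter] at hi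
    push_neg at hi
    have := hi (Finset.mem_univ i)
    simp [hp, this]
  -- C i nonempty on s
  have hne : ∀ i ∈ s, (C i).Nonempty := by
    intro i hi
    rcases Set.eq_empty_or_nonempty (C i) with h | h
    · exfalso
      have := hps i hi
      rw [hp] at this
      simp [h] at this
    · exact h
  have hbdd : ∀ i, BddBelow (g '' C i) := by
    intro i
    exact ⟨-B, fun y hy => by
      rcases hy with ⟨ω, _, rfl⟩
      linarith [(abs_le.mp (hgb ω)).1]⟩
  have hmle : ∀ i, ∀ ω ∈ C i, m i ≤ g ω := by
    intro i ω hω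
    exact csInf_le (hbdd i) ⟨ω, hω, rfl⟩
  have hub : ∀ i ∈ s, ∀ ω' ∈ C i, g ω' ≤ m i + R := by
    intro i hi ω' hω'
    have hiη : η (C i) ≠ 0 := by
      rw [hs, Finset.mem_filter] at hi; exact hi.2
    have : g ω' - R ≤ m i := by
      apply le_csInf ((hne i hi).image g)
      rintro y ⟨ω, hω, rfl⟩
      linarith [hosc i hiη ω hω ω' hω']
    linarith
  -- integrability
  have hint : Integrable g η := by
    refine Integrable.mono' (integrable_const B) hg.aestronglyMeasurable ?_
    filter_upwards with ω
    simpa using hgb ω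
  have hinte : Integrable (fun ω => Real.exp (g ω)) P₀ := by
    refine Integrable.mono' (integrable_const (Real.exp B)) (hg.exp).aestronglyMeasurable ?_
    filter_upwards with ω
    rw [Real.norm_eq_abs, abs_of_pos (Real.exp_pos _)]
    exact Real.exp_le_exp.mpr (abs_le.mp (hgb ω)).2
  -- split integral over partition
  have hsplitη : (∫ ω, g ω ∂η) = ∑ i, ∫ ω in C i, g ω ∂η := by
    rw [← setIntegral_univ, ← hCu, integral_iUnion hCm hCd hint.integrableOn, tsum_fintype]
  have hsplitP : (∫ ω, Real.exp (g ω) ∂P₀) = ∑ i, ∫ ω in C i, Real.exp (g ω) ∂P₀ := by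
    rw [← setIntegral_univ, ← hCu, integral_iUnion hCm hCd hinte.integrableOn, tsum_fintype]
  -- sum of p over s is 1
  have hpsum : ∑ i ∈ s, p i = 1 := by
    have h1 : ∑ i, p i = 1 := by
      have := measure_iUnion hCd hCm (μ := η)
      rw [hCu, measure_univ, tsum_fintype] at this
      have h2 : (∑ i, η (C i)).toReal = ∑ i, p i :=
        ENNReal.toReal_sum (fun i _ => measure_ne_top η _)
      rw [← this] at h2
      simpa using h2.symm
    rw [← h1]
    exact Finset.sum_subset s.subset_univ (fun i _ hi => hpz i hi)
  -- Step A : ∫ g dη ≤ ∑ i ∈ s, p i * m i + R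
  have stepA : (∫ ω, g ω ∂η) ≤ (∑ i ∈ s, p i * m i) + R := by
    rw [hsplitη]
    have h1 : ∑ i, ∫ ω in C i, g ω ∂η = ∑ i ∈ s, ∫ ω in C i, g ω ∂η := by
      refine (Finset.sum_subset s.subset_univ (fun i _ hi => ?_)).symm
      rw [hs, Finset.mem_filter] at hi
      push_neg at hi
      have h0 : η (C i) = 0 := hi (Finset.mem_univ i)
      rw [Measure.restrict_eq_zero.mpr h0, integral_zero_measure]
    rw [h1]
    have h2 : ∀ i ∈ s, ∫ ω in C i, g ω ∂η ≤ p i * (m i + R) := by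
      intro i hi
      have : ∫ ω in C i, g ω ∂η ≤ ∫ ω in C i, (m i + R) ∂η := by
        refine setIntegral_mono_on hint.integrableOn ((integrableOn_const_iff (by finiteness)).mpr ?_)
          (hCm i) (fun ω hω => hub i hi ω hω)
        exact Or.inr (measure_lt_top η _)
      simpa [setIntegral_const, smul_eq_mul, measureReal_def, hp] using this
    calc ∑ i ∈ s, ∫ ω in C i, g ω ∂η ≤ ∑ i ∈ s, p i * (m i + R) :=
          Finset.sum_le_sum h2
      _ = (∑ i ∈ s, p i * m i) + (∑ i ∈ s, p i) * R := by
          rw [Finset.sum_mul]; rw [← Finset.sum_add_distrib]; exact Finset.sum_congr rfl (fun _ _ => by ring)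
      _ = (∑ i ∈ s, p i * m i) + R := by rw [hpsum, one_mul]
  -- KL sum reduces to s
  have hKL : (∑ i, p i * Real.log (p i / q i)) = ∑ i ∈ s, p i * Real.log (p i / q i) := by
    refine (Finset.sum_subset s.subset_univ (fun i _ hi => ?_)).symm
    rw [hpz i hi, zero_mul]
  -- the pressure/Gibbs step
  set x : ι → ℝ := fun i => q i * Real.exp (m i) with hx
  have hxpos : ∀ i ∈ s, 0 < x i := fun i hi =>
    mul_pos (hqs i hi) (Real.exp_pos _)
  set S : ℝ := ∑ i ∈ s, x i with hS
  have hsne : s.Nonempty := by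
    by_contra h
    rw [Finset.not_nonempty_iff_eq_empty] at h
    rw [h] at hpsum
    simp at hpsum
  have hSpos : 0 < S :=
    Finset.sum_pos hxpos hsne
  have stepC : (∑ i ∈ s, p i * m i) - (∑ i ∈ s, p i * Real.log (p i / q i))
      ≤ Real.log S := by
    have key : ∀ i ∈ s, p i * m i - p i * Real.log (p i / q i) - p i * Real.log S
        ≤ x i / S - p i := by
      intro i hi
      have hpi := hps i hi
      have hqi := hqs i hi
      have hxi := hxpos i hi
      have harg : 0 < x i / (p i * S) := by positivity
      have hlog := Real.log_le_sub_one_of_pos harg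
      have heq : Real.log (x i / (p i * S)) =
          m i - Real.log (p i / q i) - Real.log S := by
        rw [Real.log_div (ne_of_gt hxi) (by positivity),
            Real.log_mul (ne_of_gt hqi) (ne_of_gt (Real.exp_pos _)),
            Real.log_mul (ne_of_gt hpi) (ne_of_gt hSpos),
            Real.log_div (ne_of_gt hpi) (ne_of_gt hqi), Real.log_exp]
        ring
      rw [heq] at hlog
      have := mul_le_mul_of_nonneg_left hlog (le_of_lt hpi)
      calc p i * m i - p i * Real.log (p i / q i) - p i * Real.log S
          = p i * (m i - Real.log (p i / q i) - Real.log S) := by ring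
        _ ≤ p i * (x i / (p i * S) - 1) := this
        _ = x i / S - p i := by field_simp
    have hsum := Finset.sum_le_sum key
    rw [Finset.sum_sub_distrib, Finset.sum_sub_distrib, Finset.sum_sub_distrib,
        ← Finset.sum_mul, hpsum, one_mul, ← Finset.sum_div, ← hS, div_self (ne_of_gt hSpos)]
      at hsum
    linarith
  -- Step B : S ≤ ∫ exp g dP₀
  have stepB : S ≤ ∫ ω, Real.exp (g ω) ∂P₀ := by
    rw [hsplitP, hS]
    have h1 : ∀ i ∈ s, x i ≤ ∫ ω in C i, Real.exp (g ω) ∂P₀ := by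
      intro i hi
      have : ∫ ω in C i, Real.exp (m i) ∂P₀ ≤ ∫ ω in C i, Real.exp (g ω) ∂P₀ := by
        refine setIntegral_mono_on ((integrableOn_const_iff (by finiteness)).mpr ?_) hinte.integrableOn
          (hCm i) (fun ω hω => Real.exp_le_exp.mpr (hmle i ω hω))
        exact Or.inr (measure_lt_top P₀ _)
      simpa [setIntegral_const, smul_eq_mul, hx, mul_comm, measureReal_def, hq] using this
    refine Finset.sum_le_sum_of_subset_of_nonneg s.subset_univ ?_ |>.trans' ?_
    · intro i _ _
      exact setIntegral_nonneg (hCm i) (fun ω _ => (Real.exp_pos _).le)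
    · exact Finset.sum_le_sum h1
  have hlogS : Real.log S ≤ Real.log (∫ ω, Real.exp (g ω) ∂P₀) :=
    Real.log_le_log hSpos stepB
  rw [hKL]
  linarith
end

section
/- (Donsker–Varadhan upper bound with oscillation error) Let $P_0$ be a probability measure, $\beta$ a finite measurable partition, and $g$ a bounded measurable function whose oscillation within each partition element is at most $R\geq 0$. Let $P$ be the Gibbs posterior $dP = Z^{-1}e^{g}\,dP_0$ with $Z = \int e^g\,dP_0$. Then $\log Z \leq H(P,\beta) + L(P : P_0\mid\beta) + \int g\,dP + R$, where $H(P,\beta) = -\sum_{C\in\beta}P(C)\log P(C)$ and $L(P:P_0\mid\beta) = \sum_{C\in\beta}P(C)\log P_0(C)$. -/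
open MeasureTheory

/-- Abstract form of Lemma "Ghostbusters": a Donsker–Varadhan upper bound with
an oscillation error term for the Gibbs posterior `dP = Z⁻¹ e^g dP₀`. -/
theorem donsker_varadhan_upper_bound {Ω : Type*} [MeasurableSpace Ω]
    (P₀ : Measure Ω) [IsProbabilityMeasure P₀]
    {ι : Type*} [Fintype ι] (C : ι → Set Ω)
    (hCm : ∀ i, MeasurableSet (C i))
    (hCd : Pairwise (Function.onFun Disjoint C))
    (hCu : (⋃ i, C i) = Set.univ)
    (g : Ω → ℝ) (hg : Measurable g) (B : ℝ) (hgb : ∀ ω, |g ω| ≤ B)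
    (R : ℝ) (hR : 0 ≤ R)
    (hosc : ∀ i, ∀ ω ∈ C i, ∀ ω' ∈ C i, |g ω - g ω'| ≤ R)
    (Z : ℝ) (hZ : Z = ∫ ω, Real.exp (g ω) ∂P₀)
    (P : Measure Ω)
    (hP : P = P₀.withDensity (fun ω => ENNReal.ofReal (Real.exp (g ω) / Z))) :
    Real.log Z ≤
      (-∑ i, (P (C i)).toReal * Real.log (P (C i)).toReal) +
        (∑ i, (P (C i)).toReal * Real.log (P₀ (C i)).toReal) +
        (∫ ω, g ω ∂P) + R := by
  have hexp_int : Integrable (fun ω => Real.exp (g ω)) P₀ :=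
    (integrable_const (Real.exp B)).mono' hg.exp.aestronglyMeasurable
      (Filter.Eventually.of_forall fun ω => by
        rw [Real.norm_eq_abs, abs_of_pos (Real.exp_pos _)]
        exact Real.exp_le_exp.2 (abs_le.1 (hgb ω)).2)
  have hZpos : 0 < Z := by
    rw [hZ]
    have h1 : ∫ (_ : Ω), Real.exp (-B) ∂P₀ ≤ ∫ ω, Real.exp (g ω) ∂P₀ :=
      integral_mono (integrable_const _) hexp_int
        (fun ω => Real.exp_le_exp.2 (neg_le_of_abs_le (hgb ω)))
    have h2 : ∫ (_ : Ω), Real.exp (-B) ∂P₀ = Real.exp (-B) := by simp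
    linarith [Real.exp_pos (-B)]
  have hnn : ∀ ω, (0:ℝ) ≤ Real.exp (g ω) / Z :=
    fun ω => div_nonneg (Real.exp_pos _).le hZpos.le
  have hdiv_int : Integrable (fun ω => Real.exp (g ω) / Z) P₀ := hexp_int.div_const Z
  have hPprob : IsProbabilityMeasure P := by
    constructor
    rw [hP, withDensity_apply _ MeasurableSet.univ, Measure.restrict_univ,
      ← ofReal_integral_eq_lintegral_ofReal hdiv_int (Filter.Eventually.of_forall hnn),
      integral_div, ← hZ, div_self hZpos.ne', ENNReal.ofReal_one]
  have hPi : ∀ i, (P (C i)).toReal = (∫ ω in C i, Real.exp (g ω) ∂P₀) / Z := by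
    intro i
    rw [hP, withDensity_apply _ (hCm i),
      ← ofReal_integral_eq_lintegral_ofReal hdiv_int.restrict
        (Filter.Eventually.of_forall hnn),
      ENNReal.toReal_ofReal (integral_nonneg fun ω => hnn ω), integral_div]
  have hgint : Integrable g P :=
    (integrable_const B).mono' hg.aestronglyMeasurable
      (Filter.Eventually.of_forall fun ω => by rw [Real.norm_eq_abs]; exact hgb ω)
  have key : ∀ i, (P (C i)).toReal * Real.log Z ≤
      -((P (C i)).toReal * Real.log (P (C i)).toReal) +
        (P (C i)).toReal * Real.log (P₀ (C i)).toReal +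
        (∫ ω in C i, g ω ∂P) + (P (C i)).toReal * R := by
    intro i
    rcases eq_or_lt_of_le (ENNReal.toReal_nonneg : (0:ℝ) ≤ (P (C i)).toReal) with h0 | hppos
    · have hP0 : P (C i) = 0 := by
        have := (ENNReal.toReal_eq_zero_iff _).1 h0.symm
        rcases this with h | h
        · exact h
        · exact absurd h (measure_ne_top P _)
      have : ∫ ω in C i, g ω ∂P = 0 := by
        rw [Measure.restrict_eq_zero.2 hP0, integral_zero_measure]
      rw [← h0, this]; simp
    · -- p > 0
      have hIZ : ∫ ω in C i, Real.exp (g ω) ∂P₀ = Z * (P (C i)).toReal := by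
        rw [hPi i]; field_simp
      have hIpos : 0 < ∫ ω in C i, Real.exp (g ω) ∂P₀ := by
        rw [hIZ]; positivity
      have hne : (C i).Nonempty := by
        by_contra h
        rw [Set.not_nonempty_iff_eq_empty] at h
        rw [h] at hIpos
        simp at hIpos
      have hIle : ∀ ω' ∈ C i, ∫ ω in C i, Real.exp (g ω) ∂P₀ ≤ (P₀ (C i)).toReal * Real.exp (g ω' + R) := by
        intro ω' hω'
        have := setIntegral_mono_on hexp_int.restrict
          (integrable_const (Real.exp (g ω' + R))).restrict (hCm i)
          (fun ω hω => by
            rw [Real.exp_le_exp]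
            have := (abs_le.1 (hosc i ω hω ω' hω')).2
            linarith)
        rw [setIntegral_const, smul_eq_mul] at this
        exact this
      obtain ⟨ω₀, hω₀⟩ := hne
      have hqpos : 0 < (P₀ (C i)).toReal := by
        by_contra h
        push_neg at h
        have h2 := hIle ω₀ hω₀
        nlinarith [Real.exp_pos (g ω₀ + R)]
      have hptlog : ∀ ω' ∈ C i,
          Real.log Z + Real.log (P (C i)).toReal - Real.log (P₀ (C i)).toReal - R ≤ g ω' := by
        intro ω' hω'
        have h1 : Real.log (Z * (P (C i)).toReal) ≤ Real.log ((P₀ (C i)).toReal * Real.exp (g ω' + R)) := by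
          apply Real.log_le_log (by positivity)
          rw [← hIZ]; exact hIle ω' hω'
        rw [Real.log_mul hZpos.ne' hppos.ne', Real.log_mul hqpos.ne'
          (Real.exp_pos _).ne', Real.log_exp] at h1
        linarith
      have hint : (P (C i)).toReal * (Real.log Z + Real.log (P (C i)).toReal - Real.log (P₀ (C i)).toReal - R) ≤ ∫ ω in C i, g ω ∂P := by
        have := setIntegral_mono_on
          (integrable_const (Real.log Z + Real.log (P (C i)).toReal - Real.log (P₀ (C i)).toReal - R)).restrict
          hgint.restrict (hCm i) hptlog
        rw [setIntegral_const, smul_eq_mul] at this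
        exact this
      nlinarith [hint]
  have hsum1 : ∑ i, (P (C i)).toReal = 1 := by
    have h := measure_iUnion hCd hCm (μ := P)
    rw [hCu, measure_univ, tsum_fintype] at h
    have := congrArg ENNReal.toReal h
    rw [ENNReal.toReal_one, ENNReal.toReal_sum (fun i _ => measure_ne_top P _)] at this
    exact this.symm
  have hsplit : ∫ ω, g ω ∂P = ∑ i, ∫ ω in C i, g ω ∂P := by
    rw [← integral_iUnion_fintype hCm hCd (fun i => hgint.integrableOn), hCu,
      Measure.restrict_univ]
  calc Real.log Z = ∑ i, (P (C i)).toReal * Real.log Z := by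
        rw [← Finset.sum_mul, hsum1, one_mul]
    _ ≤ ∑ i, (-((P (C i)).toReal * Real.log (P (C i)).toReal) +
        (P (C i)).toReal * Real.log (P₀ (C i)).toReal +
        (∫ ω in C i, g ω ∂P) + (P (C i)).toReal * R) :=
        Finset.sum_le_sum (fun i _ => key i)
    _ = (-∑ i, (P (C i)).toReal * Real.log (P (C i)).toReal) +
        (∑ i, (P (C i)).toReal * Real.log (P₀ (C i)).toReal) +
        (∫ ω, g ω ∂P) + R := by
        rw [hsplit]
        simp only [Finset.sum_add_distrib, Finset.sum_neg_distrib, ← Finset.sum_mul,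
          hsum1, one_mul]
end
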